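/- arXiv:1411.5985 — 6 statements merged into one kernel-verified Lean document; each statement's English description precedes it below -/
import Mathlib

section
/- Let V be a finite set of points in ℝⁿ (Euclidean space) and let X be the union, over all pairs of points u, v ∈ V, of the closed segments [u, v]. Then X is 0-tight: for every nonzero continuous linear functional φ : ℝⁿ → ℝ and every real number c, the set X ∩ {x | φ(x) < c} is preconnected. -/
/-- On a segment, `φ` attains a value at one endpoint below any value on the segment. -/
lemma seg_endpoint_le {n : ℕ} (φ : EuclideanSpace ℝ (Fin n) →L[ℝ] ℝ)
    {u v x : EuclideanSpace ℝ (Fin n)} (hx : x ∈ segment ℝ u v) :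
    φ u ≤ φ x ∨ φ v ≤ φ x := by
  obtain ⟨a, b, ha, hb, hab, rfl⟩ := hx
  have hadd : φ (a • u + b • v) = a * φ u + b * φ v := by
    simp [map_add, map_smul]
  rw [hadd]
  have h2 : a * φ u + b * φ u = φ u := by rw [← add_mul, hab, one_mul]
  have h3 : a * φ v + b * φ v = φ v := by rw [← add_mul, hab, one_mul]
  rcases le_total (φ u) (φ v) with h | h
  · left; nlinarith [mul_nonneg hb (sub_nonneg.2 h)]
  · right; nlinarith [mul_nonneg ha (sub_nonneg.2 h)]

/-- The 1-skeleton of a simplex is 0-tight: if `X` is the union of all closed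
segments between points of a finite set `V ⊆ ℝⁿ`, then for every nonzero
continuous linear functional `φ` and every real `c`, the part of `X` inside the
open half-space `{x | φ x < c}` is preconnected. -/
theorem stmt_3 {n : ℕ} (V : Finset (EuclideanSpace ℝ (Fin n)))
    (X : Set (EuclideanSpace ℝ (Fin n)))
    (hX : X = ⋃ u ∈ V, ⋃ v ∈ V, segment ℝ u v)
    (φ : EuclideanSpace ℝ (Fin n) →L[ℝ] ℝ) (hφ : φ ≠ 0) (c : ℝ) :
    IsPreconnected (X ∩ {x | φ x < c}) := by
  have hconv : Convex ℝ {x : EuclideanSpace ℝ (Fin n) | φ x < c} :=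
    convex_halfSpace_lt ⟨φ.map_add, φ.map_smul⟩ c
  have hsegX : ∀ a ∈ V, ∀ b ∈ V, segment ℝ a b ⊆ X := by
    intro a ha b hb z hz
    rw [hX]
    simp only [Set.mem_iUnion]
    exact ⟨a, ha, b, hb, hz⟩
  apply isPreconnected_of_forall_pair
  intro x hx y hy
  obtain ⟨hxX, hxc⟩ := hx
  obtain ⟨hyX, hyc⟩ := hy
  rw [hX] at hxX hyX
  simp only [Set.mem_iUnion] at hxX hyX
  obtain ⟨u, hu, v, hv, hxseg⟩ := hxX
  obtain ⟨u', hu', v', hv', hyseg⟩ := hyX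
  obtain ⟨w, hwuv, hwle⟩ :
      ∃ w, (w = u ∨ w = v) ∧ φ w ≤ φ x := by
    rcases seg_endpoint_le φ hxseg with h | h
    · exact ⟨u, Or.inl rfl, h⟩
    · exact ⟨v, Or.inr rfl, h⟩
  obtain ⟨w', hw'uv, hw'le⟩ :
      ∃ w', (w' = u' ∨ w' = v') ∧ φ w' ≤ φ y := by
    rcases seg_endpoint_le φ hyseg with h | h
    · exact ⟨u', Or.inl rfl, h⟩
    · exact ⟨v', Or.inr rfl, h⟩
  have hwV : w ∈ V := by rcases hwuv with rfl | rfl <;> assumption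
  have hw'V : w' ∈ V := by rcases hw'uv with rfl | rfl <;> assumption
  have hwseg : w ∈ segment ℝ u v := by
    rcases hwuv with rfl | rfl
    · exact left_mem_segment ℝ _ _
    · exact right_mem_segment ℝ _ _
  have hw'seg : w' ∈ segment ℝ u' v' := by
    rcases hw'uv with rfl | rfl
    · exact left_mem_segment ℝ _ _
    · exact right_mem_segment ℝ _ _
  have hwc : φ w < c := lt_of_le_of_lt hwle hxc
  have hw'c : φ w' < c := lt_of_le_of_lt hw'le hyc
  -- the middle segment lies in the halfspace
  have hmid : segment ℝ w w' ⊆ {x : EuclideanSpace ℝ (Fin n) | φ x < c} := by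
    exact hconv.segment_subset hwc hw'c
  set A := segment ℝ u v ∩ {x : EuclideanSpace ℝ (Fin n) | φ x < c} with hA
  set B := segment ℝ w w' with hB
  set C := segment ℝ u' v' ∩ {x : EuclideanSpace ℝ (Fin n) | φ x < c} with hC
  refine ⟨A ∪ (B ∪ C), ?_, Or.inl ⟨hxseg, hxc⟩, Or.inr (Or.inr ⟨hyseg, hyc⟩), ?_⟩
  · intro z hz
    rcases hz with hz | hz | hz
    · exact ⟨hsegX u hu v hv hz.1, hz.2⟩
    · exact ⟨hsegX w hwV w' hw'V hz, hmid hz⟩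
    · exact ⟨hsegX u' hu' v' hv' hz.1, hz.2⟩
  · have hApc : IsPreconnected A := ((convex_segment u v).inter hconv).isPreconnected
    have hBpc : IsPreconnected B := (convex_segment w w').isPreconnected
    have hCpc : IsPreconnected C := ((convex_segment u' v').inter hconv).isPreconnected
    have hBC : IsPreconnected (B ∪ C) :=
      hBpc.union w' (right_mem_segment ℝ w w') ⟨hw'seg, hw'c⟩ hCpc
    exact hApc.union w ⟨hwseg, hwc⟩ (Or.inl (left_mem_segment ℝ w w')) hBC
end

section
/- Let X be a subset of ℝⁿ which is 0-tight, i.e., for every nonzero continuous linear functional φ : ℝⁿ → ℝ and every real c, the set X ∩ {x | φ(x) < c} is preconnected. Let F be a finite subset of X. Then X ∪ convexHull(F) is again 0-tight: for every nonzero continuous linear functional φ and every real c, (X ∪ convexHull(F)) ∩ {x | φ(x) < c} is preconnected. -/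
/-- Attaching the convex hull of a finite subset of a 0-tight set preserves
0-tightness: if every open half-space cuts `X` in a preconnected piece, and
`F` is a finite subset of `X`, then the same holds for `X ∪ convexHull ℝ F`. -/
theorem stmt_4 {n : ℕ} (X : Set (EuclideanSpace ℝ (Fin n)))
    (htight : ∀ φ : EuclideanSpace ℝ (Fin n) →L[ℝ] ℝ, φ ≠ 0 → ∀ c : ℝ,
      IsPreconnected (X ∩ {x | φ x < c}))
    (F : Finset (EuclideanSpace ℝ (Fin n))) (hF : ↑F ⊆ X)
    (φ : EuclideanSpace ℝ (Fin n) →L[ℝ] ℝ) (hφ : φ ≠ 0) (c : ℝ) :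
    IsPreconnected ((X ∪ convexHull ℝ (↑F : Set (EuclideanSpace ℝ (Fin n)))) ∩
      {x | φ x < c}) := by
  set A : Set (EuclideanSpace ℝ (Fin n)) := X ∩ {x | φ x < c} with hA
  have hAconn : IsPreconnected A := htight φ hφ c
  -- for any point of hull ∩ halfspace, get a vertex below it
  have key : ∀ p ∈ convexHull ℝ (↑F : Set (EuclideanSpace ℝ (Fin n))), p ∈ {x | φ x < c} →
      ∃ v ∈ (F : Set (EuclideanSpace ℝ (Fin n))), v ∈ A ∧
        segment ℝ v p ⊆ (X ∪ convexHull ℝ (↑F : Set (EuclideanSpace ℝ (Fin n)))) ∩ {x | φ x < c} := by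
    intro p hp hpc
    have hconc : ConcaveOn ℝ Set.univ (fun x => φ x) :=
      (φ.toLinearMap.concaveOn convex_univ)
    obtain ⟨v, hvF, hv⟩ := hconc.exists_le_of_mem_convexHull (Set.subset_univ _) hp
    refine ⟨v, hvF, ⟨hF hvF, lt_of_le_of_lt hv hpc⟩, ?_⟩
    intro z hz
    constructor
    · exact Or.inr ((convex_convexHull ℝ _).segment_subset
        (subset_convexHull ℝ _ hvF) hp hz)
    · exact (convex_halfSpace_lt (φ.toLinearMap.isLinear) c).segment_subset
        (lt_of_le_of_lt hv hpc) hpc hz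
  rcases Set.eq_empty_or_nonempty
      ((X ∪ convexHull ℝ (↑F : Set (EuclideanSpace ℝ (Fin n)))) ∩ {x | φ x < c}) with h | ⟨p₀, hp₀⟩
  · rw [h]; exact isPreconnected_empty
  -- the whole set is nonempty, so A is nonempty
  have hAne : A.Nonempty := by
    rcases hp₀ with ⟨hp₀m, hp₀c⟩
    rcases hp₀m with h | h
    · exact ⟨p₀, h, hp₀c⟩
    · obtain ⟨v, _, hvA, _⟩ := key p₀ h hp₀c
      exact ⟨v, hvA⟩
  obtain ⟨x₀, hx₀⟩ := hAne
  apply isPreconnected_of_forall x₀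
  rintro y ⟨hy | hy, hyc⟩
  · exact ⟨A, fun z hz => ⟨Or.inl hz.1, hz.2⟩, hx₀, ⟨hy, hyc⟩, hAconn⟩
  · obtain ⟨v, hvF, hvA, hseg⟩ := key y hy hyc
    refine ⟨A ∪ segment ℝ v y, ?_, Or.inl hx₀, Or.inr (right_mem_segment ℝ v y), ?_⟩
    · rintro z (hz | hz)
      · exact ⟨Or.inl hz.1, hz.2⟩
      · exact hseg hz
    · exact hAconn.union v hvA (left_mem_segment ℝ v y)
        (convex_segment v y).isPreconnected
end

section
/- Let X be a subset of ℝⁿ which is 0-tight, i.e., for every nonzero continuous linear functional φ : ℝⁿ → ℝ and every real c, the set X ∩ {x | φ(x) < c} is preconnected. Let F be a finite subset of X and let w ∈ convexHull(F). Then the set X ∪ (⋃_{u ∈ F} [w, u]), obtained by adjoining to X the segments from w to each point of F, is again 0-tight. -/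
/-- Adjoining to a 0-tight set `X` a new vertex `w` lying in the convex hull of a
finite subset `F ⊆ X`, together with the segments from `w` to each point of `F`,
preserves 0-tightness. -/
theorem stmt_5 {n : ℕ} (X : Set (EuclideanSpace ℝ (Fin n)))
    (htight : ∀ φ : EuclideanSpace ℝ (Fin n) →L[ℝ] ℝ, φ ≠ 0 → ∀ c : ℝ,
      IsPreconnected (X ∩ {x | φ x < c}))
    (F : Finset (EuclideanSpace ℝ (Fin n))) (hF : ↑F ⊆ X)
    (w : EuclideanSpace ℝ (Fin n))
    (hw : w ∈ convexHull ℝ (↑F : Set (EuclideanSpace ℝ (Fin n))))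
    (φ : EuclideanSpace ℝ (Fin n) →L[ℝ] ℝ) (hφ : φ ≠ 0) (c : ℝ) :
    IsPreconnected ((X ∪ ⋃ u ∈ F, segment ℝ w u) ∩ {x | φ x < c}) := by
  set H : Set (EuclideanSpace ℝ (Fin n)) := {x | φ x < c} with hH
  have hHconv : Convex ℝ H := convex_halfSpace_lt φ.toLinearMap.isLinear c
  have key : ∀ u x, x ∈ segment ℝ w u → φ x < c → φ w < c ∨ φ u < c := by
    rintro u x ⟨a, b, ha, hb, hab, rfl⟩ hx
    by_contra h
    push_neg at h
    obtain ⟨h1, h2⟩ := h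
    simp only [map_add, map_smul, smul_eq_mul] at hx
    have hc : a * c + b * c = c := by rw [← add_mul, hab, one_mul]
    nlinarith [mul_le_mul_of_nonneg_left h1 ha, mul_le_mul_of_nonneg_left h2 hb]
  have hA : IsPreconnected (X ∩ H) := htight φ hφ c
  have hP : ∀ u, IsPreconnected (segment ℝ w u ∩ H) := fun u =>
    ((convex_segment w u).inter hHconv).isPreconnected
  have hTeq : (X ∪ ⋃ u ∈ F, segment ℝ w u) ∩ H
      = (X ∩ H) ∪ ⋃ u ∈ F, (segment ℝ w u ∩ H) := by
    ext x
    simp only [Set.mem_inter_iff, Set.mem_union, Set.mem_iUnion]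
    tauto
  rw [hTeq]
  obtain ⟨u₀, hu₀F, hu₀⟩ : ∃ u ∈ F, φ u ≤ φ w := by
    by_contra h
    push_neg at h
    have hsub : (↑F : Set (EuclideanSpace ℝ (Fin n))) ⊆ {x | φ w < φ x} :=
      fun u hu => h u hu
    have h2 : φ w < φ w :=
      convexHull_min hsub (convex_halfSpace_gt φ.toLinearMap.isLinear (φ w)) hw
    exact lt_irrefl _ h2
  by_cases hwc : φ w < c
  · -- case φ w < c
    have hu₀c : φ u₀ < c := lt_of_le_of_lt hu₀ hwc
    have hsegH : segment ℝ w u₀ ⊆ H := by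
      rintro x ⟨a, b, ha, hb, hab, rfl⟩
      simp only [hH, Set.mem_setOf_eq, map_add, map_smul, smul_eq_mul]
      have hc : a * c + b * c = c := by rw [← add_mul, hab, one_mul]
      nlinarith [mul_le_mul_of_nonneg_left hwc.le ha, mul_le_mul_of_nonneg_left hu₀c.le hb]
    have hS : IsPreconnected ((X ∩ H) ∪ segment ℝ w u₀) :=
      IsPreconnected.union u₀ ⟨hF hu₀F, hu₀c⟩ (right_mem_segment ℝ w u₀) hA
        (convex_segment w u₀).isPreconnected
    have hmain := isPreconnected_sUnion w
      (insert ((X ∩ H) ∪ segment ℝ w u₀)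
        ((fun u => segment ℝ w u ∩ H) '' ↑F)) ?_ ?_
    · have heq : ⋃₀ (insert ((X ∩ H) ∪ segment ℝ w u₀)
          ((fun u => segment ℝ w u ∩ H) '' ↑F))
          = (X ∩ H) ∪ ⋃ u ∈ F, (segment ℝ w u ∩ H) := by
        rw [Set.sUnion_insert, Set.sUnion_image]
        ext x
        simp only [Set.mem_union, Set.mem_iUnion, Finset.mem_coe, Set.mem_inter_iff]
        constructor
        · rintro ((h | h) | ⟨u, huF, hu⟩)
          · exact Or.inl h
          · exact Or.inr ⟨u₀, hu₀F, h, hsegH h⟩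
          · exact Or.inr ⟨u, huF, hu⟩
        · rintro (h | ⟨u, huF, hu⟩)
          · exact Or.inl (Or.inl h)
          · exact Or.inr ⟨u, huF, hu⟩
      rw [heq] at hmain
      exact hmain
    · rintro s (rfl | ⟨u, huF, rfl⟩)
      · exact Or.inr (left_mem_segment ℝ w u₀)
      · exact ⟨left_mem_segment ℝ w u, hwc⟩
    · rintro s (rfl | ⟨u, huF, rfl⟩)
      · exact hS
      · exact hP u
  · -- case φ w ≥ c
    rcases (X ∩ H).eq_empty_or_nonempty with hempty | ⟨a, ha⟩
    · have hPe : ∀ u ∈ F, segment ℝ w u ∩ H = ∅ := by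
        intro u huF
        ext x
        simp only [Set.mem_inter_iff, Set.mem_empty_iff_false, iff_false, not_and]
        intro hxs hxH
        rcases key u x hxs hxH with h | h
        · exact hwc h
        · exact Set.eq_empty_iff_forall_notMem.mp hempty u ⟨hF huF, h⟩
      have : ((X ∩ H) ∪ ⋃ u ∈ F, (segment ℝ w u ∩ H)) = ∅ := by
        rw [hempty]
        simp only [Set.empty_union, Set.iUnion_eq_empty]
        intro u
        by_cases huF : u ∈ F
        · simp [hPe u huF]
        · simp [huF]
      rw [this]
      exact isPreconnected_empty
    · have hmain := isPreconnected_sUnion a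
        (insert (X ∩ H)
          ((fun u => (X ∩ H) ∪ (segment ℝ w u ∩ H)) '' ↑F)) ?_ ?_
      · have heq : ⋃₀ (insert (X ∩ H)
            ((fun u => (X ∩ H) ∪ (segment ℝ w u ∩ H)) '' ↑F))
            = (X ∩ H) ∪ ⋃ u ∈ F, (segment ℝ w u ∩ H) := by
          rw [Set.sUnion_insert, Set.sUnion_image]
          ext x
          simp only [Set.mem_union, Set.mem_iUnion, Finset.mem_coe]
          constructor
          · rintro (h | ⟨u, huF, h | h⟩)
            · exact Or.inl h
            · exact Or.inl h
            · exact Or.inr ⟨u, huF, h⟩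
          · rintro (h | ⟨u, huF, h⟩)
            · exact Or.inl h
            · exact Or.inr ⟨u, huF, Or.inr h⟩
        rw [heq] at hmain
        exact hmain
      · rintro s (rfl | ⟨u, huF, rfl⟩)
        · exact ha
        · exact Or.inl ha
      · rintro s (rfl | ⟨u, huF, rfl⟩)
        · exact hA
        · show IsPreconnected (X ∩ H ∪ segment ℝ w u ∩ H)
          rcases (segment ℝ w u ∩ H).eq_empty_or_nonempty with he | ⟨x, hxs, hxH⟩
          · rw [he, Set.union_empty]
            exact hA
          · have huc : φ u < c := by
              rcases key u x hxs hxH with h | h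
              · exact absurd h hwc
              · exact h
            exact IsPreconnected.union u ⟨hF huF, huc⟩
              ⟨right_mem_segment ℝ w u, huc⟩ hA (hP u)
end

section
/- Let ι be a finite index type, let v : ι → ℝⁿ be any family of points, and let T be a collection of 3-element subsets of ι such that every 2-element subset of ι is contained in some member of T. Let X = ⋃_{t ∈ T} convexHull(v(t)) be the union of the corresponding closed triangles. Then X is 0-tight: for every nonzero continuous linear functional φ : ℝⁿ → ℝ and every real c, X ∩ {x | φ(x) < c} is preconnected. -/
/-- In a convex hull of a finite image, the linear functional attains a value
at least that of some vertex. -/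
lemma stmt_6_min_vertex {n : ℕ} {ι : Type*}
    (v : ι → EuclideanSpace ℝ (Fin n))
    (φ : EuclideanSpace ℝ (Fin n) →L[ℝ] ℝ) (t : Finset ι) (ht : t.Nonempty)
    {x : EuclideanSpace ℝ (Fin n)} (hx : x ∈ convexHull ℝ (v '' (↑t : Set ι))) :
    ∃ i ∈ t, φ (v i) ≤ φ x := by
  obtain ⟨i, hi, hmin⟩ := t.exists_min_image (fun k => φ (v k)) ht
  refine ⟨i, hi, ?_⟩
  have hsub : convexHull ℝ (v '' (↑t : Set ι)) ⊆ {y | φ (v i) ≤ φ y} := by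
    apply convexHull_min
    · rintro _ ⟨k, hk, rfl⟩
      exact hmin k hk
    · exact convex_halfSpace_ge ⟨φ.map_add, φ.map_smul⟩ _
  exact hsub hx

/-- A union of straight triangles whose triple system covers all pairs of indices
is 0-tight: if every 2-element subset of `ι` is contained in a member of the
family `T` of 3-element subsets, then the union of the triangles
`convexHull ℝ (v '' t)` for `t ∈ T` meets every open half-space in a
preconnected set. -/
theorem stmt_6 {n : ℕ} {ι : Type*} [Fintype ι]
    (v : ι → EuclideanSpace ℝ (Fin n))
    (T : Set (Finset ι)) (hT3 : ∀ t ∈ T, t.card = 3)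
    (hTcov : ∀ s : Finset ι, s.card = 2 → ∃ t ∈ T, s ⊆ t)
    (X : Set (EuclideanSpace ℝ (Fin n)))
    (hX : X = ⋃ t ∈ T, convexHull ℝ (v '' (↑t : Set ι)))
    (φ : EuclideanSpace ℝ (Fin n) →L[ℝ] ℝ) (hφ : φ ≠ 0) (c : ℝ) :
    IsPreconnected (X ∩ {x | φ x < c}) := by
  classical
  set H : Set (EuclideanSpace ℝ (Fin n)) := {x | φ x < c} with hH
  have hHconv : Convex ℝ H := convex_halfSpace_lt ⟨φ.map_add, φ.map_smul⟩ _
  apply isPreconnected_of_forall_pair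
  rintro x ⟨hxX, hxH⟩ y ⟨hyX, hyH⟩
  rw [hX] at hxX hyX
  simp only [Set.mem_iUnion] at hxX hyX
  obtain ⟨t₁, ht₁, hx₁⟩ := hxX
  obtain ⟨t₂, ht₂, hy₂⟩ := hyX
  have ht₁ne : t₁.Nonempty := Finset.card_pos.mp (by rw [hT3 t₁ ht₁]; norm_num)
  have ht₂ne : t₂.Nonempty := Finset.card_pos.mp (by rw [hT3 t₂ ht₂]; norm_num)
  obtain ⟨i, hi, hφi⟩ := stmt_6_min_vertex v φ t₁ ht₁ne hx₁
  obtain ⟨j, hj, hφj⟩ := stmt_6_min_vertex v φ t₂ ht₂ne hy₂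
  have hviH : v i ∈ H := lt_of_le_of_lt hφi hxH
  have hvjH : v j ∈ H := lt_of_le_of_lt hφj hyH
  have hviX : v i ∈ X := by
    rw [hX]; simp only [Set.mem_iUnion]
    exact ⟨t₁, ht₁, subset_convexHull ℝ _ ⟨i, hi, rfl⟩⟩
  have hvjX : v j ∈ X := by
    rw [hX]; simp only [Set.mem_iUnion]
    exact ⟨t₂, ht₂, subset_convexHull ℝ _ ⟨j, hj, rfl⟩⟩
  -- segments
  have hseg1 : segment ℝ x (v i) ⊆ X ∩ H := by
    intro z hz
    constructor
    · rw [hX]; simp only [Set.mem_iUnion]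
      exact ⟨t₁, ht₁, (convex_convexHull ℝ _).segment_subset hx₁
        (subset_convexHull ℝ (v '' (↑t₁ : Set ι)) ⟨i, hi, rfl⟩) hz⟩
    · exact hHconv.segment_subset hxH hviH hz
  have hseg3 : segment ℝ (v j) y ⊆ X ∩ H := by
    intro z hz
    constructor
    · rw [hX]; simp only [Set.mem_iUnion]
      exact ⟨t₂, ht₂, (convex_convexHull ℝ _).segment_subset
        (subset_convexHull ℝ (v '' (↑t₂ : Set ι)) ⟨j, hj, rfl⟩) hy₂ hz⟩
    · exact hHconv.segment_subset hvjH hyH hz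
  have hseg2 : segment ℝ (v i) (v j) ⊆ X ∩ H := by
    by_cases hij : i = j
    · subst hij
      rw [segment_same]
      intro z hz
      rw [Set.mem_singleton_iff] at hz
      subst hz
      exact ⟨hviX, hviH⟩
    · have hcard : ({i, j} : Finset ι).card = 2 := Finset.card_pair hij
      obtain ⟨t₃, ht₃, hsub⟩ := hTcov ({i, j} : Finset ι) hcard
      intro z hz
      constructor
      · rw [hX]; simp only [Set.mem_iUnion]
        refine ⟨t₃, ht₃, (convex_convexHull ℝ _).segment_subset
          (subset_convexHull ℝ (v '' (↑t₃ : Set ι)) ⟨i, hsub (by simp), rfl⟩)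
          (subset_convexHull ℝ (v '' (↑t₃ : Set ι)) ⟨j, hsub (by simp), rfl⟩) hz⟩
      · exact hHconv.segment_subset hviH hvjH hz
  refine ⟨segment ℝ x (v i) ∪ (segment ℝ (v i) (v j) ∪ segment ℝ (v j) y), ?_, ?_, ?_, ?_⟩
  · exact Set.union_subset hseg1 (Set.union_subset hseg2 hseg3)
  · exact Or.inl (left_mem_segment ℝ x (v i))
  · exact Or.inr (Or.inr (right_mem_segment ℝ (v j) y))
  · apply IsPreconnected.union (v i)
    · exact right_mem_segment ℝ x (v i)
    · exact Or.inl (left_mem_segment ℝ (v i) (v j))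
    · exact (convex_segment x (v i)).isPreconnected
    · apply IsPreconnected.union (v j)
      · exact right_mem_segment ℝ (v i) (v j)
      · exact left_mem_segment ℝ (v j) y
      · exact (convex_segment (v i) (v j)).isPreconnected
      · exact (convex_segment (v j) y).isPreconnected
end

section
/- Let v : ZMod 5 → ℝ⁴ be a family of 5 affinely independent points of ℝ⁴ (the vertices of a 4-simplex), and let M = ⋃_{i ∈ ZMod 5} convexHull{v(i), v(i+1), v(i+2)} be the union of the five triangles with cyclically consecutive vertex triples. Then M is 0-tight: for every nonzero continuous linear functional φ : ℝ⁴ → ℝ and every real c, M ∩ {x | φ(x) < c} is preconnected. -/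
/-- The canonical polyhedral Möbius band in `ℝ⁴`, the union of the five triangles
`{v i, v (i+1), v (i+2)}` (indices mod 5) on the vertices of a 4-simplex, is
0-tight. -/
theorem stmt_7 (v : ZMod 5 → EuclideanSpace ℝ (Fin 4))
    (hindep : AffineIndependent ℝ v)
    (M : Set (EuclideanSpace ℝ (Fin 4)))
    (hM : M = ⋃ i : ZMod 5,
      convexHull ℝ ({v i, v (i + 1), v (i + 2)} : Set (EuclideanSpace ℝ (Fin 4))))
    (φ : EuclideanSpace ℝ (Fin 4) →L[ℝ] ℝ) (hφ : φ ≠ 0) (c : ℝ) :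
    IsPreconnected (M ∩ {x | φ x < c}) := by
  set H : Set (EuclideanSpace ℝ (Fin 4)) := {x | φ x < c} with hH
  have hHconv : Convex ℝ H := convex_halfSpace_lt (φ.toLinearMap.isLinear) c
  set T : ZMod 5 → Set (EuclideanSpace ℝ (Fin 4)) :=
    fun i => convexHull ℝ ({v i, v (i+1), v (i+2)} : Set (EuclideanSpace ℝ (Fin 4))) with hT
  have hTconv : ∀ i, Convex ℝ (T i) := fun i => convex_convexHull ℝ _
  have hTM : ∀ i, T i ⊆ M := by
    intro i; rw [hM]; exact Set.subset_iUnion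
      (fun i => convexHull ℝ ({v i, v (i+1), v (i+2)} : Set (EuclideanSpace ℝ (Fin 4)))) i
  have hmem : ∀ i, v i ∈ T i ∧ v (i+1) ∈ T i ∧ v (i+2) ∈ T i := by
    intro i
    exact ⟨subset_convexHull ℝ _ (by simp), subset_convexHull ℝ _ (by simp),
      subset_convexHull ℝ _ (by simp)⟩
  -- if a triangle meets the open halfspace, one of its vertices is in the halfspace
  have hvert : ∀ i, ∀ x ∈ T i ∩ H, ∃ a : ZMod 5, v a ∈ T i ∧ v a ∈ H := by
    intro i x hx
    by_contra h
    push_neg at h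
    have hsub : T i ⊆ {y | c ≤ φ y} := by
      apply convexHull_min _ (convex_halfSpace_ge φ.toLinearMap.isLinear c)
      intro y hy
      simp only [Set.mem_insert_iff, Set.mem_singleton_iff] at hy
      have key : ∀ a : ZMod 5, v a ∈ T i → c ≤ φ (v a) := by
        intro a haT
        have := h a haT
        simp only [hH, Set.mem_setOf_eq, not_lt] at this
        exact this
      rcases hy with rfl | rfl | rfl
      · exact key i (hmem i).1
      · exact key (i+1) (hmem i).2.1
      · exact key (i+2) (hmem i).2.2
    have hx2 : φ x < c := hx.2
    exact absurd hx2 (not_lt.mpr (hsub hx.1))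
  -- any two vertices lie in a common triangle
  have hpairZ : ∀ a b : ZMod 5, ∃ k : ZMod 5,
      (a = k ∨ a = k+1 ∨ a = k+2) ∧ (b = k ∨ b = k+1 ∨ b = k+2) := by decide
  have hpair : ∀ a b : ZMod 5, ∃ k : ZMod 5, v a ∈ T k ∧ v b ∈ T k := by
    intro a b
    obtain ⟨k, ha, hb⟩ := hpairZ a b
    refine ⟨k, ?_, ?_⟩
    · rcases ha with h1 | h1 | h1 <;> rw [h1]
      exacts [(hmem k).1, (hmem k).2.1, (hmem k).2.2]
    · rcases hb with h1 | h1 | h1 <;> rw [h1]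
      exacts [(hmem k).1, (hmem k).2.1, (hmem k).2.2]
  rcases Set.eq_empty_or_nonempty (M ∩ H) with he | ⟨x0, hx0⟩
  · rw [he]; exact isPreconnected_empty
  · obtain ⟨i0, hxi0⟩ : ∃ i, x0 ∈ T i := by
      have := hx0.1; rw [hM] at this; simpa using this
    obtain ⟨a0, ha0T, ha0H⟩ := hvert i0 x0 ⟨hxi0, hx0.2⟩
    apply isPreconnected_of_forall (v a0)
    intro y hy
    obtain ⟨j, hyj⟩ : ∃ j, y ∈ T j := by
      have := hy.1; rw [hM] at this; simpa using this
    obtain ⟨b, hbT, hbH⟩ := hvert j y ⟨hyj, hy.2⟩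
    obtain ⟨k, hak, hbk⟩ := hpair a0 b
    refine ⟨(T j ∩ H) ∪ segment ℝ (v b) (v a0), ?_, ?_, ?_, ?_⟩
    · apply Set.union_subset
      · exact Set.inter_subset_inter_left H (hTM j)
      · intro z hz
        exact ⟨hTM k ((hTconv k).segment_subset hbk hak hz),
          hHconv.segment_subset hbH ha0H hz⟩
    · exact Or.inr (right_mem_segment ℝ (v b) (v a0))
    · exact Or.inl ⟨hyj, hy.2⟩
    · exact IsPreconnected.union (v b) ⟨hbT, hbH⟩ (left_mem_segment ℝ (v b) (v a0))
        ((hTconv j).inter hHconv).isPreconnected (convex_segment _ _).isPreconnected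
end

section
/- Let a : ZMod 3 → ℝ² be three affinely independent points of the plane, and in ℝ³ = ℝ² × ℝ set A(i) := (a(i), 0) and B(i) := (a(i), 1) for i ∈ ZMod 3. Let X = ⋃_{i ∈ ZMod 3} convexHull{A(i), A(i+1), B(i+1), B(i)} be the union of the three lateral quadrilateral faces of the resulting triangular prism. Then X is 0-tight: for every nonzero continuous linear functional φ : ℝ³ → ℝ and every real c, X ∩ {x | φ(x) < c} is preconnected. -/
open Set

private abbrev G3 := EuclideanSpace ℝ (Fin 2) × ℝ

private lemma segJoin {S T : Set G3} (hT : Convex ℝ T) (hTS : T ⊆ S) {u w : G3}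
    (hu : u ∈ T) (hw : w ∈ T) : JoinedIn S u w :=
  ((hT.isPathConnected ⟨u, hu⟩).joinedIn u hu w hw).mono hTS

private lemma aux3 (φ : G3 →L[ℝ] ℝ) (c : ℝ) (P Q : ZMod 3 → G3)
    (hle : ∀ i, φ (P i) ≤ φ (Q i)) :
    IsPreconnected ((⋃ i : ZMod 3,
      convexHull ℝ ({P i, P (i + 1), Q (i + 1), Q i} : Set G3)) ∩ {x | φ x < c}) := by
  set F : ZMod 3 → Set G3 :=
    fun i => convexHull ℝ ({P i, P (i + 1), Q (i + 1), Q i} : Set G3) with hF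
  set H : Set G3 := {x | φ x < c} with hH
  set S : Set G3 := (⋃ i : ZMod 3, F i) ∩ H with hS
  have hHconv : Convex ℝ H := convex_halfSpace_lt φ.toLinearMap.isLinear c
  have hFconv : ∀ i, Convex ℝ (F i) := fun i => convex_convexHull ℝ _
  have hPmem : ∀ i, P i ∈ F i := fun i => subset_convexHull ℝ _ (by simp)
  have hPmem' : ∀ i, P (i + 1) ∈ F i := fun i => subset_convexHull ℝ _ (by simp)
  have hFS : ∀ i, F i ∩ H ⊆ S := fun i =>
    inter_subset_inter_left H (subset_iUnion F i)
  -- on each face, some P-vertex minimizes φ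
  have hmin : ∀ i, ∃ k, (k = i ∨ k = i + 1) ∧ F i ⊆ {y | φ (P k) ≤ φ y} := by
    intro i
    rcases le_total (φ (P i)) (φ (P (i + 1))) with h | h
    · refine ⟨i, Or.inl rfl,
        convexHull_min ?_ (convex_halfSpace_ge φ.toLinearMap.isLinear _)⟩
      rintro y (rfl | rfl | rfl | rfl) <;> simp only [mem_setOf_eq]
      · exact le_refl _
      · exact h
      · exact h.trans (hle _)
      · exact hle i
    · refine ⟨i + 1, Or.inr rfl,
        convexHull_min ?_ (convex_halfSpace_ge φ.toLinearMap.isLinear _)⟩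
      rintro y (rfl | rfl | rfl | rfl) <;> simp only [mem_setOf_eq]
      · exact h
      · exact le_refl _
      · exact hle _
      · exact h.trans (hle i)
  have hPk_mem : ∀ i k, (k = i ∨ k = i + 1) → P k ∈ F i := by
    rintro i k (rfl | rfl)
    · exact hPmem _
    · exact hPmem' _
  -- global minimizing bottom vertex
  obtain ⟨j, hj⟩ : ∃ j, ∀ i, φ (P j) ≤ φ (P i) := Finite.exists_min fun i => φ (P i)
  rcases eq_empty_or_nonempty S with hemp | ⟨x0, hx0⟩
  · rw [hemp]; exact isPreconnected_empty
  -- φ (P j) < c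
  have hjc : φ (P j) < c := by
    obtain ⟨hx0X, hx0H⟩ := hx0
    obtain ⟨i, hi⟩ := mem_iUnion.mp hx0X
    obtain ⟨k, hk, hksub⟩ := hmin i
    exact lt_of_le_of_lt ((hj k).trans (hksub hi)) hx0H
  have hvS : P j ∈ S := ⟨mem_iUnion.mpr ⟨j, hPmem j⟩, hjc⟩
  -- every point of S joins to P j inside S
  have claim : ∀ x ∈ S, JoinedIn S x (P j) := by
    rintro x ⟨hxX, hxH⟩
    obtain ⟨i, hi⟩ := mem_iUnion.mp hxX
    obtain ⟨k, hk, hksub⟩ := hmin i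
    have hkc : φ (P k) < c := lt_of_le_of_lt (hksub hi) hxH
    have J1 : JoinedIn S x (P k) :=
      segJoin ((hFconv i).inter hHconv) (hFS i) ⟨hi, hxH⟩ ⟨hPk_mem i k hk, hkc⟩
    have htri : ∀ p q : ZMod 3, p = q ∨ q = p + 1 ∨ p = q + 1 := by decide
    have J2 : JoinedIn S (P k) (P j) := by
      rcases htri k j with h | h | h
      · exact h ▸ JoinedIn.refl ⟨mem_iUnion.mpr ⟨k, hPmem k⟩, hkc⟩
      · exact segJoin ((hFconv k).inter hHconv) (hFS k) ⟨hPmem k, hkc⟩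
          ⟨hPk_mem k j (Or.inr h), hjc⟩
      · exact segJoin ((hFconv j).inter hHconv) (hFS j) ⟨hPk_mem j k (Or.inr h), hkc⟩
          ⟨hPmem j, hjc⟩
    exact J1.trans J2
  have : IsPathConnected S := ⟨P j, hvS, fun {y} hy => (claim y hy).symm⟩
  exact this.isConnected.isPreconnected

/-- The union of the three lateral quadrilateral faces of a triangular prism in
`ℝ³ = ℝ² × ℝ` (the paper's tight polyhedral cylinder) is 0-tight. -/
theorem stmt_8 (a : ZMod 3 → EuclideanSpace ℝ (Fin 2))
    (hindep : AffineIndependent ℝ a)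
    (A B : ZMod 3 → EuclideanSpace ℝ (Fin 2) × ℝ)
    (hA : ∀ i, A i = (a i, (0 : ℝ))) (hB : ∀ i, B i = (a i, (1 : ℝ)))
    (X : Set (EuclideanSpace ℝ (Fin 2) × ℝ))
    (hX : X = ⋃ i : ZMod 3,
      convexHull ℝ ({A i, A (i + 1), B (i + 1), B i} : Set (EuclideanSpace ℝ (Fin 2) × ℝ)))
    (φ : EuclideanSpace ℝ (Fin 2) × ℝ →L[ℝ] ℝ) (hφ : φ ≠ 0) (c : ℝ) :
    IsPreconnected (X ∩ {x | φ x < c}) := by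
  subst hX
  have key : ∀ i, φ (B i) - φ (A i) = φ ((0 : EuclideanSpace ℝ (Fin 2)), (1 : ℝ)) := by
    intro i
    rw [← φ.map_sub, hA, hB]
    congr 1
    simp [Prod.sub_def]
  rcases le_total (0 : ℝ) (φ ((0 : EuclideanSpace ℝ (Fin 2)), (1 : ℝ))) with h | h
  · exact aux3 φ c A B fun i => sub_nonneg.mp (by rw [key i]; exact h)
  · have hle : ∀ i, φ (B i) ≤ φ (A i) := fun i =>
      sub_nonpos.mp (by rw [key i]; exact h)
    have hsets : ∀ i, ({A i, A (i + 1), B (i + 1), B i} :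
        Set (EuclideanSpace ℝ (Fin 2) × ℝ)) = {B i, B (i + 1), A (i + 1), A i} := by
      intro i; ext y; simp only [mem_insert_iff, mem_singleton_iff]; tauto
    simp_rw [hsets]
    exact aux3 φ c B A hle
end
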